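/- Let g ≥ 3 and let α_{1,1},…,α_{1,g}, α_{2,1},…,α_{2,g} be 2g independent indeterminates. Let M_g be the determinant of the (2g−3)×(2g−3) matrix on the columns (1,i) (2≤i≤g) and (2,j) (3≤j≤g) of the stacked matrix Z of complete homogeneous symmetric polynomials q_h(α_{k,i},α_{k,j}). Then M_3 ≠ 0, and for g ≥ 4 the coefficient of α_{1,g}^{g−2} α_{2,g}^{g−3} in M_g equals (α_{2,2} − α_{2,1}) M_{g−1}; consequently M_g ≠ 0 for all g ≥ 3, and hence for a general choice of complex numbers α_{k,i} the linear system Q_{1,0}(s)=⋯=Q_{1,g−2}(s)=Q_{2,0}(s)=⋯=Q_{2,g−3}(s)=0 has rank exactly 2g−3 and solution space of dimension C(g,2) − (2g−3) = (g−2)(g−3)/2. -/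

import Mathlib

open MvPolynomial

/-- Complete homogeneous symmetric polynomial of degree `h` in two variables. -/
def qpoly {R : Type*} [CommRing R] (h : ℕ) (x y : R) : R :=
  ∑ m ∈ Finset.range (h + 1), x ^ m * y ^ (h - m)

/-- The indeterminate `α_{k,i}` over `ℂ` (`k ∈ {1,2}` as `Fin 2`, `i ∈ {1,…,g}` as
`0,…,g−1`). -/
noncomputable def av (k : Fin 2) (i : ℕ) : MvPolynomial (Fin 2 × ℕ) ℂ :=
  MvPolynomial.X (k, i)

/-- The `(2g−3)×(2g−3)` matrix on the columns `(1,i)` (`2≤i≤g`) and `(2,j)` (`3≤j≤g`)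
of the stacked matrix `Z` of complete homogeneous symmetric polynomials. -/
noncomputable def Nmat (g : ℕ) :
    Matrix (Fin (g - 1) ⊕ Fin (g - 2)) (Fin (g - 1) ⊕ Fin (g - 2))
      (MvPolynomial (Fin 2 × ℕ) ℂ) :=
  Matrix.of fun r c =>
    match r, c with
    | Sum.inl h, Sum.inl i => qpoly h.1 (av 0 0) (av 0 (i.1 + 1))
    | Sum.inl h, Sum.inr j => qpoly h.1 (av 0 1) (av 0 (j.1 + 2))
    | Sum.inr h, Sum.inl i => qpoly (h.1 + 1) (av 1 0) (av 1 (i.1 + 1))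
    | Sum.inr h, Sum.inr j => qpoly (h.1 + 1) (av 1 1) (av 1 (j.1 + 2))

/-- `M_g`, the determinant of the above minor. -/
noncomputable def Mdet (g : ℕ) : MvPolynomial (Fin 2 × ℕ) ℂ := (Nmat g).det

/-- The full `(2g−3) × C(g,2)` matrix `Z` with entries evaluated at complex numbers
`a k i` (rows: the coefficient vectors of `Q_{1,g−2},…,Q_{1,0}` then
`Q_{2,g−2},…,Q_{2,1}`, columns indexed by pairs `i < j`). -/
def Zev (g : ℕ) (a : Fin 2 → ℕ → ℂ) :
    Matrix (Fin (g - 1) ⊕ Fin (g - 2)) {p : Fin g × Fin g // p.1 < p.2} ℂ :=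
  Matrix.of fun r p =>
    match r with
    | Sum.inl h => qpoly h.1 (a 0 p.1.1.1) (a 0 p.1.2.1)
    | Sum.inr h => qpoly (h.1 + 1) (a 1 p.1.1.1) (a 1 p.1.2.1)

section helpers
variable {R : Type*} [CommRing R]

lemma qpoly_comm (h : ℕ) (x y : R) : qpoly h x y = qpoly h y x := by
  unfold qpoly
  rw [← Finset.sum_range_reflect]
  apply Finset.sum_congr rfl
  intro m hm
  rw [Finset.mem_range] at hm
  have h1 : h + 1 - 1 - m = h - m := by omega
  have h2 : h - (h - m) = m := by omega
  rw [h1, h2, mul_comm]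

lemma qpoly_map {S : Type*} [CommRing S] (f : R →+* S) (h : ℕ) (x y : R) :
    f (qpoly h x y) = qpoly h (f x) (f y) := by
  unfold qpoly
  rw [map_sum]
  simp [map_mul, map_pow]

/-- sum decomposition used for column pieces -/
lemma qpoly_eq_sum_pieces (K h : ℕ) (hh : h < K) (x y : R) :
    qpoly h x y = ∑ m ∈ Finset.range K, y ^ m * (if m ≤ h then x ^ (h - m) else 0) := by
  rw [qpoly_comm]
  unfold qpoly
  rw [← Finset.sum_subset (Finset.range_subset_range.2 (by omega : h + 1 ≤ K))
    (fun m _ hm => by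
      rw [Finset.mem_range, not_lt] at hm
      rw [if_neg (by omega), mul_zero])]
  apply Finset.sum_congr rfl
  intro m hm
  rw [Finset.mem_range] at hm
  rw [if_pos (by omega)]

variable {n : Type*} [DecidableEq n] [Fintype n]

lemma det_updateColumn_zero (M : Matrix n n R) (j : n) :
    (M.updateCol j 0).det = 0 := by
  have := Matrix.det_updateCol_smul M j (0 : R) 0
  simpa using this

lemma det_updateColumn_finset_sum {β : Type*} (M : Matrix n n R) (j : n)
    (s : Finset β) (f : β → n → R) :
    (M.updateCol j (∑ i ∈ s, f i)).det = ∑ i ∈ s, (M.updateCol j (f i)).det := by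
  classical
  induction s using Finset.induction_on with
  | empty => simpa using det_updateColumn_zero M j
  | insert _ _ hk ih =>
      rw [Finset.sum_insert hk, Matrix.det_updateCol_add, ih, Finset.sum_insert hk]

lemma updateColumn_comm (M : Matrix n n R) {c1 c2 : n} (h : c1 ≠ c2) (u v : n → R) :
    (M.updateCol c1 u).updateCol c2 v = (M.updateCol c2 v).updateCol c1 u := by
  ext r c
  rcases eq_or_ne c c1 with rfl | h1
  · simp [Matrix.updateCol_apply, h, h.symm]
  · rcases eq_or_ne c c2 with rfl | h2
    · simp [Matrix.updateCol_apply, h1]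
    · simp [Matrix.updateCol_apply, h1, h2]

lemma det_updateColumn_swap (M : Matrix n n R) {c1 c2 : n} (h : c1 ≠ c2) (u v : n → R) :
    ((M.updateCol c1 u).updateCol c2 v).det
      = - ((M.updateCol c1 v).updateCol c2 u).det := by
  have key : (M.updateCol c1 u).updateCol c2 v
      = ((M.updateCol c1 v).updateCol c2 u).submatrix id (Equiv.swap c1 c2) := by
    ext r c
    rcases eq_or_ne c c1 with rfl | h1
    · simp [Matrix.updateCol_apply, Equiv.swap_apply_left, h, h.symm]
    · rcases eq_or_ne c c2 with rfl | h2
      · simp [Matrix.updateCol_apply, Equiv.swap_apply_right, h]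
      · simp [Matrix.updateCol_apply, Equiv.swap_apply_of_ne_of_ne h1 h2, h1, h2]
  rw [key, Matrix.det_permute', Equiv.Perm.sign_swap h]
  simp

end helpers

section supp
variable {σ : Type*} {R : Type*} [CommRing R]

lemma det_mem_subalg {n : Type*} [DecidableEq n] [Fintype n]
    (S : Subalgebra R (MvPolynomial σ R)) (M : Matrix n n (MvPolynomial σ R))
    (hM : ∀ i j, M i j ∈ S) : M.det ∈ S := by
  rw [Matrix.det_apply]
  refine Subalgebra.sum_mem S fun p _ => ?_
  have hp : ∏ i, M (p i) i ∈ S := Subalgebra.prod_mem S fun i _ => hM _ _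
  rcases Int.units_eq_one_or (Equiv.Perm.sign p) with h | h <;> rw [h] <;> simpa using hp

lemma coeff_zero_of_supported {s : Set σ} {p : MvPolynomial σ R}
    (hp : p ∈ supported R s) {e : σ →₀ ℕ} {v : σ} (hv : v ∉ s) (he : e ∈ p.support) :
    e v = 0 := by
  by_contra hne
  have : v ∈ p.vars := (mem_vars v).2 ⟨e, he, Finsupp.mem_support_iff.2 hne⟩
  exact hv (mem_supported.1 hp this)

/-- the key coefficient-extraction lemma -/
lemma coeff_pow_mul_eq [DecidableEq σ] (a b : σ) (hab : a ≠ b) (k l : ℕ)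
    (d : σ →₀ ℕ) (D : MvPolynomial σ R) :
    MvPolynomial.coeff (d + Finsupp.single a k + Finsupp.single b l)
        (X a ^ k * X b ^ l * D) = MvPolynomial.coeff d D := by
  have h1 : (X a ^ k * X b ^ l : MvPolynomial σ R)
      = monomial (Finsupp.single a k + Finsupp.single b l) 1 := by
    rw [X_pow_eq_monomial, X_pow_eq_monomial, monomial_mul, one_mul]
  have h2 : d + Finsupp.single a k + Finsupp.single b l
      = (Finsupp.single a k + Finsupp.single b l) + d := by
    rw [add_assoc, add_comm]
  rw [h1, h2, coeff_monomial_mul, one_mul]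

lemma coeff_pow_mul_eq_zero [DecidableEq σ] {s : Set σ} (a b : σ) (hab : a ≠ b)
    (ha : a ∉ s) (hb : b ∉ s) (k l m n : ℕ) (hmn : ¬(m = k ∧ n = l))
    (d : σ →₀ ℕ) (hda : d a = 0) (hdb : d b = 0)
    {D : MvPolynomial σ R} (hD : D ∈ supported R s) :
    MvPolynomial.coeff (d + Finsupp.single a k + Finsupp.single b l)
        (X a ^ m * X b ^ n * D) = 0 := by
  classical
  by_contra hc
  have hmem : (d + Finsupp.single a k + Finsupp.single b l)
      ∈ (X a ^ m * X b ^ n * D).support := MvPolynomial.mem_support_iff.2 hc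
  have h1 : (X a ^ m * X b ^ n : MvPolynomial σ R)
      = monomial (Finsupp.single a m + Finsupp.single b n) 1 := by
    rw [X_pow_eq_monomial, X_pow_eq_monomial, monomial_mul, one_mul]
  rw [h1] at hmem
  have := MvPolynomial.support_mul _ D hmem
  rw [Finset.mem_add] at this
  obtain ⟨u, hu, e, he, heq⟩ := this
  have hu' : u = Finsupp.single a m + Finsupp.single b n := by
    have := support_monomial_subset hu
    simpa using this
  subst hu'
  have hea : e a = 0 := coeff_zero_of_supported hD ha he
  have heb : e b = 0 := coeff_zero_of_supported hD hb he
  have ha' : m = k := by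
    have := congrArg (fun f : σ →₀ ℕ => f a) heq
    simp [Finsupp.single_apply, hab, hab.symm, hda, hea] at this
    omega
  have hb' : n = l := by
    have := congrArg (fun f : σ →₀ ℕ => f b) heq
    simp [Finsupp.single_apply, hab, hab.symm, hdb, heb] at this
    omega
  exact hmn ⟨ha', hb'⟩

end supp
lemma det_key (g : ℕ) (hg : 4 ≤ g) :
    (((Nmat g).updateCol (Sum.inl ⟨g-2, by omega⟩)
        (fun r => if r = Sum.inl ⟨g-2, by omega⟩ then 1 else 0)).updateCol
          (Sum.inr ⟨g-3, by omega⟩)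
        (fun r => if r = Sum.inr ⟨g-3, by omega⟩ then 1 else 0)).det = Mdet (g-1) := by
  set c1 : Fin (g-1) ⊕ Fin (g-2) := Sum.inl ⟨g-2, by omega⟩ with hc1
  set c2 : Fin (g-1) ⊕ Fin (g-2) := Sum.inr ⟨g-3, by omega⟩ with hc2
  set M : Matrix (Fin (g-1) ⊕ Fin (g-2)) (Fin (g-1) ⊕ Fin (g-2)) (MvPolynomial (Fin 2 × ℕ) ℂ) :=
    ((Nmat g).updateCol c1 (fun r => if r = c1 then 1 else 0)).updateCol c2
      (fun r => if r = c2 then 1 else 0) with hM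
  have hne : c1 ≠ c2 := by simp [hc1, hc2]
  have hMapp : ∀ r c, M r c = if c = c2 then (if r = c2 then 1 else 0)
      else if c = c1 then (if r = c1 then 1 else 0) else Nmat g r c := by
    intro r c
    rw [hM]
    by_cases h2 : c = c2
    · subst h2
      rw [Matrix.updateCol_self, if_pos rfl]
    · rw [Matrix.updateCol_ne h2, if_neg h2]
      by_cases h1 : c = c1
      · subst h1
        rw [Matrix.updateCol_self, if_pos rfl]
      · rw [Matrix.updateCol_ne h1, if_neg h1]
  let E : (Fin (g-2) ⊕ Fin (g-3)) ⊕ Fin 2 ≃ (Fin (g-1) ⊕ Fin (g-2)) :=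
    { toFun := Sum.elim
        (Sum.elim (fun i => .inl (Fin.castLE (by omega) i))
          (fun j => .inr (Fin.castLE (by omega) j))) ![c1, c2]
      invFun := Sum.elim
        (fun i => if h : i.1 < g-2 then .inl (.inl ⟨i.1, h⟩) else .inr 0)
        (fun j => if h : j.1 < g-3 then .inl (.inr ⟨j.1, h⟩) else .inr 1)
      left_inv := by
        rintro ((i | j) | k)
        · simp only [Sum.elim_inl, Fin.coe_castLE]
          rw [dif_pos i.2]
        · simp only [Sum.elim_inl, Sum.elim_inr, Fin.coe_castLE]
          rw [dif_pos j.2]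
        · fin_cases k
          · simp only [Fin.mk_zero, Sum.elim_inr, Matrix.cons_val_zero, hc1, Sum.elim_inl]
            rw [dif_neg (lt_irrefl (g-2))]
          · simp only [Fin.mk_one, Sum.elim_inr, Matrix.cons_val_one, Matrix.head_cons, Matrix.cons_val_zero, hc2]
            rw [dif_neg (lt_irrefl (g-3))]
      right_inv := by
        rintro (i | j)
        · simp only [Sum.elim_inl]
          by_cases h : i.1 < g-2
          · rw [dif_pos h]
            simp [Fin.ext_iff]
          · rw [dif_neg h]
            simp only [Sum.elim_inr, Matrix.cons_val_zero, hc1, Sum.inl.injEq]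
            have := i.2
            exact Fin.ext (show g - 2 = ↑i by omega)
        · simp only [Sum.elim_inr]
          by_cases h : j.1 < g-3
          · rw [dif_pos h]
            simp [Fin.ext_iff]
          · rw [dif_neg h]
            simp only [Sum.elim_inr, Matrix.cons_val_one, Matrix.head_cons, Matrix.cons_val_zero, hc2, Sum.inr.injEq]
            have := j.2
            exact Fin.ext (show g - 3 = ↑j by omega) }
  have hdet : M.det = (M.submatrix E E).det := (Matrix.det_submatrix_equiv_self E M).symm
  rw [hdet, ← Matrix.fromBlocks_toBlocks (M.submatrix E E)]
  have hE1 : ∀ i : Fin (g-2), E (.inl (.inl i)) = Sum.inl (Fin.castLE (by omega) i) :=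
    fun _ => rfl
  have hE2 : ∀ j : Fin (g-3), E (.inl (.inr j)) = Sum.inr (Fin.castLE (by omega) j) :=
    fun _ => rfl
  have hE34 : ∀ k : Fin 2, E (.inr k) = if k = 0 then c1 else c2 := by
    intro k
    fin_cases k <;> simp [E]
  have hcol1 : ∀ i : Fin (g-2), Sum.inl (Fin.castLE (show g-2 ≤ g-1 by omega) i) ≠ c1 := by
    intro i h
    rw [hc1, Sum.inl.injEq, Fin.ext_iff] at h
    have := i.2
    simp only [Fin.coe_castLE] at h
    omega
  have hcol2 : ∀ j : Fin (g-3), Sum.inr (Fin.castLE (show g-3 ≤ g-2 by omega) j) ≠ c2 := by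
    intro j h
    rw [hc2, Sum.inr.injEq, Fin.ext_iff] at h
    have := j.2
    simp only [Fin.coe_castLE] at h
    omega
  have h12 : (M.submatrix E E).toBlocks₁₂ = 0 := by
    ext r k : 2
    simp only [Matrix.toBlocks₁₂, Matrix.of_apply, Matrix.submatrix_apply, Matrix.zero_apply]
    have hr : E (.inl r) ≠ c1 ∧ E (.inl r) ≠ c2 := by
      rcases r with i | j
      · rw [hE1]
        exact ⟨hcol1 i, by simp [hc2]⟩
      · rw [hE2]
        exact ⟨by simp [hc1], hcol2 j⟩
    rw [hMapp, hE34]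
    by_cases hk : k = 0 <;> simp [hk, hne, hne.symm, hr.1, hr.2]
  have h22 : (M.submatrix E E).toBlocks₂₂ = 1 := by
    ext k l : 2
    simp only [Matrix.toBlocks₂₂, Matrix.of_apply, Matrix.submatrix_apply]
    rw [hMapp, hE34, hE34]
    fin_cases k <;> fin_cases l <;>
      simp [Matrix.one_apply, hne, hne.symm]
  have h11 : (M.submatrix E E).toBlocks₁₁ = Nmat (g-1) := by
    funext r c
    simp only [Matrix.toBlocks₁₁, Matrix.of_apply, Matrix.submatrix_apply]
    have hc : E (.inl c) ≠ c1 ∧ E (.inl c) ≠ c2 := by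
      rcases c with i | j
      · rw [hE1]
        exact ⟨hcol1 i, by simp [hc2]⟩
      · rw [hE2]
        exact ⟨by simp [hc1], hcol2 j⟩
    rw [hMapp, if_neg hc.2, if_neg hc.1]
    rcases r with i | j <;> rcases c with i' | j'
    · rw [hE1, hE1]; rfl
    · rw [hE1, hE2]; rfl
    · rw [hE2, hE1]; rfl
    · rw [hE2, hE2]; rfl
  rw [h12, h22, h11, Matrix.det_fromBlocks_zero₁₂, Matrix.det_one, mul_one]
  rfl
lemma key2 (g : ℕ) (hg : 4 ≤ g) (d : (Fin 2 × ℕ) →₀ ℕ)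
    (hd0 : d ((0 : Fin 2), g - 1) = 0) (hd1 : d ((1 : Fin 2), g - 1) = 0) :
    MvPolynomial.coeff
        (d + Finsupp.single ((0 : Fin 2), g - 1) (g - 2) +
          Finsupp.single ((1 : Fin 2), g - 1) (g - 3)) (Mdet g) =
      MvPolynomial.coeff d ((av 1 1 - av 1 0) * Mdet (g - 1)) := by
  classical
  set a0 : Fin 2 × ℕ := ((0 : Fin 2), g - 1) with ha0
  set b0 : Fin 2 × ℕ := ((1 : Fin 2), g - 1) with hb0
  have hab : a0 ≠ b0 := by simp [ha0, hb0]
  set s : Set (Fin 2 × ℕ) := {v | v.2 ≠ g - 1} with hs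
  have ha : a0 ∉ s := by simp [hs, ha0]
  have hb : b0 ∉ s := by simp [hs, hb0]
  set c1 : Fin (g-1) ⊕ Fin (g-2) := Sum.inl ⟨g-2, by omega⟩ with hc1
  set c2 : Fin (g-1) ⊕ Fin (g-2) := Sum.inr ⟨g-3, by omega⟩ with hc2
  have hne : c1 ≠ c2 := by simp [hc1, hc2]
  -- membership facts
  have hXmem : ∀ (k : Fin 2) (i : ℕ), i ≠ g - 1 → av k i ∈ supported ℂ s := by
    intro k i hi
    rw [av, X_mem_supported]
    exact hi
  have hqmem : ∀ (h : ℕ) (x y : MvPolynomial (Fin 2 × ℕ) ℂ), x ∈ supported ℂ s →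
      y ∈ supported ℂ s → qpoly h x y ∈ supported ℂ s := by
    intro h x y hx hy
    refine Subalgebra.sum_mem _ fun m _ => ?_
    exact mul_mem (pow_mem hx m) (pow_mem hy (h - m))
  have hNmem : ∀ r c, c ≠ c1 → c ≠ c2 → Nmat g r c ∈ supported ℂ s := by
    rintro (h | h) (i | j) hi hj
    · refine hqmem _ _ _ (hXmem _ _ (by omega)) (hXmem _ _ ?_)
      intro hcon
      apply hi
      rw [hc1, Sum.inl.injEq, Fin.ext_iff]
      show (i : ℕ) = g - 2
      omega
    · refine hqmem _ _ _ (hXmem _ _ (by omega)) (hXmem _ _ ?_)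
      intro hcon
      apply hj
      rw [hc2, Sum.inr.injEq, Fin.ext_iff]
      show (j : ℕ) = g - 3
      omega
    · refine hqmem _ _ _ (hXmem _ _ (by omega)) (hXmem _ _ ?_)
      intro hcon
      apply hi
      rw [hc1, Sum.inl.injEq, Fin.ext_iff]
      show (i : ℕ) = g - 2
      omega
    · refine hqmem _ _ _ (hXmem _ _ (by omega)) (hXmem _ _ ?_)
      intro hcon
      apply hj
      rw [hc2, Sum.inr.injEq, Fin.ext_iff]
      show (j : ℕ) = g - 3
      omega
  -- the column piece vectors
  set vv : MvPolynomial (Fin 2 × ℕ) ℂ → ℕ → (Fin (g-1) ⊕ Fin (g-2)) → MvPolynomial (Fin 2 × ℕ) ℂ :=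
    fun x m => Sum.elim (fun h : Fin (g-1) => if m ≤ h.1 then x ^ (h.1 - m) else 0)
      (fun _ => 0) with hvv
  set uu : MvPolynomial (Fin 2 × ℕ) ℂ → ℕ → (Fin (g-1) ⊕ Fin (g-2)) → MvPolynomial (Fin 2 × ℕ) ℂ :=
    fun x n => Sum.elim (fun _ => 0)
      (fun h : Fin (g-2) => if n ≤ h.1 + 1 then x ^ (h.1 + 1 - n) else 0) with huu
  have hvmem : ∀ (x : MvPolynomial (Fin 2 × ℕ) ℂ), x ∈ supported ℂ s →
      ∀ m r, vv x m r ∈ supported ℂ s := by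
    intro x hx m r
    rcases r with h | h
    · rw [hvv]
      simp only [Sum.elim_inl]
      split
      · exact pow_mem hx _
      · exact Subalgebra.zero_mem _
    · exact Subalgebra.zero_mem _
  have humem : ∀ (x : MvPolynomial (Fin 2 × ℕ) ℂ), x ∈ supported ℂ s →
      ∀ n r, uu x n r ∈ supported ℂ s := by
    intro x hx n r
    rcases r with h | h
    · exact Subalgebra.zero_mem _
    · rw [huu]
      simp only [Sum.elim_inr]
      split
      · exact pow_mem hx _
      · exact Subalgebra.zero_mem _
  -- supported property of the partial determinants
  have hDmem : ∀ w1 w2 : (Fin (g-1) ⊕ Fin (g-2)) → MvPolynomial (Fin 2 × ℕ) ℂ,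
      (∀ r, w1 r ∈ supported ℂ s) → (∀ r, w2 r ∈ supported ℂ s) →
      (((Nmat g).updateCol c1 w1).updateCol c2 w2).det ∈ supported ℂ s := by
    intro w1 w2 h1 h2
    refine det_mem_subalg _ _ fun r c => ?_
    by_cases hcc2 : c = c2
    · subst hcc2
      rw [Matrix.updateCol_self]
      exact h2 r
    · rw [Matrix.updateCol_ne hcc2]
      by_cases hcc1 : c = c1
      · subst hcc1
        rw [Matrix.updateCol_self]
        exact h1 r
      · rw [Matrix.updateCol_ne hcc1]
        exact hNmem r c hcc1 hcc2
  -- the two column expansions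
  have hcol1 : (fun r => Nmat g r c1)
      = (∑ m ∈ Finset.range (g-1), (X a0 : MvPolynomial (Fin 2 × ℕ) ℂ) ^ m • vv (av 0 0) m)
        + (∑ n ∈ Finset.range (g-1), (X b0 : MvPolynomial (Fin 2 × ℕ) ℂ) ^ n • uu (av 1 0) n) := by
    funext r
    simp only [Pi.add_apply, Finset.sum_apply, Pi.smul_apply, smul_eq_mul]
    rcases r with h | h
    · rw [hvv, huu]
      simp only [Sum.elim_inl, mul_zero, Finset.sum_const_zero, add_zero]
      have h1 : Nmat g (Sum.inl h) c1 = qpoly h.1 (av 0 0) (X a0) := by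
        show qpoly h.1 (av 0 0) (av 0 ((g-2) + 1)) = qpoly h.1 (av 0 0) (X a0)
        rw [show g - 2 + 1 = g - 1 from by omega]
        rfl
      rw [h1, qpoly_eq_sum_pieces (g-1) h.1 h.2]
    · rw [hvv, huu]
      simp only [Sum.elim_inr, mul_zero, Finset.sum_const_zero, zero_add]
      have h1 : Nmat g (Sum.inr h) c1 = qpoly (h.1 + 1) (av 1 0) (X b0) := by
        show qpoly (h.1 + 1) (av 1 0) (av 1 ((g-2) + 1)) = qpoly (h.1 + 1) (av 1 0) (X b0)
        rw [show g - 2 + 1 = g - 1 from by omega]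
        rfl
      rw [h1, qpoly_eq_sum_pieces (g-1) (h.1 + 1) (by omega)]
  have hcol2 : (fun r => Nmat g r c2)
      = (∑ m ∈ Finset.range (g-1), (X a0 : MvPolynomial (Fin 2 × ℕ) ℂ) ^ m • vv (av 0 1) m)
        + (∑ n ∈ Finset.range (g-1), (X b0 : MvPolynomial (Fin 2 × ℕ) ℂ) ^ n • uu (av 1 1) n) := by
    funext r
    simp only [Pi.add_apply, Finset.sum_apply, Pi.smul_apply, smul_eq_mul]
    rcases r with h | h
    · rw [hvv, huu]
      simp only [Sum.elim_inl, mul_zero, Finset.sum_const_zero, add_zero]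
      have h1 : Nmat g (Sum.inl h) c2 = qpoly h.1 (av 0 1) (X a0) := by
        show qpoly h.1 (av 0 1) (av 0 ((g-3) + 2)) = qpoly h.1 (av 0 1) (X a0)
        rw [show g - 3 + 2 = g - 1 from by omega]
        rfl
      rw [h1, qpoly_eq_sum_pieces (g-1) h.1 h.2]
    · rw [hvv, huu]
      simp only [Sum.elim_inr, mul_zero, Finset.sum_const_zero, zero_add]
      have h1 : Nmat g (Sum.inr h) c2 = qpoly (h.1 + 1) (av 1 1) (X b0) := by
        show qpoly (h.1 + 1) (av 1 1) (av 1 ((g-3) + 2)) = qpoly (h.1 + 1) (av 1 1) (X b0)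
        rw [show g - 3 + 2 = g - 1 from by omega]
        rfl
      rw [h1, qpoly_eq_sum_pieces (g-1) (h.1 + 1) (by omega)]
  -- expansion of the determinant in column c1
  have hD1 : ∀ w : (Fin (g-1) ⊕ Fin (g-2)) → MvPolynomial (Fin 2 × ℕ) ℂ,
      (((Nmat g).updateCol c1 (fun r => Nmat g r c1)).updateCol c2 w).det
      = (∑ m ∈ Finset.range (g-1), (X a0 : MvPolynomial (Fin 2 × ℕ) ℂ) ^ m *
          (((Nmat g).updateCol c1 (vv (av 0 0) m)).updateCol c2 w).det)
      + (∑ n ∈ Finset.range (g-1), (X b0 : MvPolynomial (Fin 2 × ℕ) ℂ) ^ n *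
          (((Nmat g).updateCol c1 (uu (av 1 0) n)).updateCol c2 w).det) := by
    intro w
    rw [updateColumn_comm _ hne, hcol1, Matrix.det_updateCol_add,
      det_updateColumn_finset_sum, det_updateColumn_finset_sum]
    congr 1
    · refine Finset.sum_congr rfl fun m _ => ?_
      rw [Matrix.det_updateCol_smul, ← updateColumn_comm _ hne]
    · refine Finset.sum_congr rfl fun n _ => ?_
      rw [Matrix.det_updateCol_smul, ← updateColumn_comm _ hne]
  rw [show Mdet g = (((Nmat g).updateCol c1 (fun r => Nmat g r c1)).updateCol c2
      (fun r => Nmat g r c2)).det from by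
    rw [Matrix.updateCol_eq_self, Matrix.updateCol_eq_self, Mdet]]
  rw [hcol2, Matrix.det_updateCol_add, det_updateColumn_finset_sum,
    det_updateColumn_finset_sum]
  simp only [Matrix.det_updateCol_smul]
  simp only [hD1]
  simp only [mul_add, Finset.mul_sum, MvPolynomial.coeff_add, MvPolynomial.coeff_sum,
    Finset.sum_add_distrib]
  have mem00 := hXmem 0 0 (by omega)
  have mem01 := hXmem 0 1 (by omega)
  have mem10 := hXmem 1 0 (by omega)
  have mem11 := hXmem 1 1 (by omega)
  have z1 : (∑ x ∈ Finset.range (g-1), ∑ y ∈ Finset.range (g-1),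
      MvPolynomial.coeff (d + Finsupp.single a0 (g-2) + Finsupp.single b0 (g-3))
        ((X a0 : MvPolynomial (Fin 2 × ℕ) ℂ) ^ x * (X a0 ^ y *
          (((Nmat g).updateCol c1 (vv (av 0 0) y)).updateCol c2 (vv (av 0 1) x)).det)))
      = 0 := by
    refine Finset.sum_eq_zero fun x _ => Finset.sum_eq_zero fun y _ => ?_
    rw [show (X a0 : MvPolynomial (Fin 2 × ℕ) ℂ) ^ x * (X a0 ^ y *
        (((Nmat g).updateCol c1 (vv (av 0 0) y)).updateCol c2 (vv (av 0 1) x)).det)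
        = X a0 ^ (x+y) * X b0 ^ 0 *
          (((Nmat g).updateCol c1 (vv (av 0 0) y)).updateCol c2 (vv (av 0 1) x)).det
      from by ring]
    exact coeff_pow_mul_eq_zero a0 b0 hab ha hb (g-2) (g-3) (x+y) 0 (by omega) d hd0 hd1
      (hDmem _ _ (hvmem _ mem00 _) (hvmem _ mem01 _))
  have z4 : (∑ x ∈ Finset.range (g-1), ∑ y ∈ Finset.range (g-1),
      MvPolynomial.coeff (d + Finsupp.single a0 (g-2) + Finsupp.single b0 (g-3))
        ((X b0 : MvPolynomial (Fin 2 × ℕ) ℂ) ^ x * (X b0 ^ y *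
          (((Nmat g).updateCol c1 (uu (av 1 0) y)).updateCol c2 (uu (av 1 1) x)).det)))
      = 0 := by
    refine Finset.sum_eq_zero fun x _ => Finset.sum_eq_zero fun y _ => ?_
    rw [show (X b0 : MvPolynomial (Fin 2 × ℕ) ℂ) ^ x * (X b0 ^ y *
        (((Nmat g).updateCol c1 (uu (av 1 0) y)).updateCol c2 (uu (av 1 1) x)).det)
        = X a0 ^ 0 * X b0 ^ (x+y) *
          (((Nmat g).updateCol c1 (uu (av 1 0) y)).updateCol c2 (uu (av 1 1) x)).det
      from by ring]
    exact coeff_pow_mul_eq_zero a0 b0 hab ha hb (g-2) (g-3) 0 (x+y) (by omega) d hd0 hd1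
      (hDmem _ _ (humem _ mem10 _) (humem _ mem11 _))
  have s2 : (∑ x ∈ Finset.range (g-1), ∑ y ∈ Finset.range (g-1),
      MvPolynomial.coeff (d + Finsupp.single a0 (g-2) + Finsupp.single b0 (g-3))
        ((X a0 : MvPolynomial (Fin 2 × ℕ) ℂ) ^ x * (X b0 ^ y *
          (((Nmat g).updateCol c1 (uu (av 1 0) y)).updateCol c2 (vv (av 0 1) x)).det)))
      = MvPolynomial.coeff d
        (((Nmat g).updateCol c1 (uu (av 1 0) (g-3))).updateCol c2 (vv (av 0 1) (g-2))).det := by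
    rw [Finset.sum_eq_single_of_mem (g-2) (Finset.mem_range.2 (by omega))
      (fun x _ hxne => Finset.sum_eq_zero fun y _ => by
        rw [show (X a0 : MvPolynomial (Fin 2 × ℕ) ℂ) ^ x * (X b0 ^ y *
            (((Nmat g).updateCol c1 (uu (av 1 0) y)).updateCol c2 (vv (av 0 1) x)).det)
            = X a0 ^ x * X b0 ^ y *
              (((Nmat g).updateCol c1 (uu (av 1 0) y)).updateCol c2 (vv (av 0 1) x)).det
          from by ring]
        exact coeff_pow_mul_eq_zero a0 b0 hab ha hb (g-2) (g-3) x y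
          (fun hc => hxne hc.1) d hd0 hd1
          (hDmem _ _ (humem _ mem10 _) (hvmem _ mem01 _)))]
    rw [Finset.sum_eq_single_of_mem (g-3) (Finset.mem_range.2 (by omega))
      (fun y _ hyne => by
        rw [show (X a0 : MvPolynomial (Fin 2 × ℕ) ℂ) ^ (g-2) * (X b0 ^ y *
            (((Nmat g).updateCol c1 (uu (av 1 0) y)).updateCol c2 (vv (av 0 1) (g-2))).det)
            = X a0 ^ (g-2) * X b0 ^ y *
              (((Nmat g).updateCol c1 (uu (av 1 0) y)).updateCol c2 (vv (av 0 1) (g-2))).det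
          from by ring]
        exact coeff_pow_mul_eq_zero a0 b0 hab ha hb (g-2) (g-3) (g-2) y
          (fun hc => hyne hc.2) d hd0 hd1
          (hDmem _ _ (humem _ mem10 _) (hvmem _ mem01 _)))]
    rw [show (X a0 : MvPolynomial (Fin 2 × ℕ) ℂ) ^ (g-2) * (X b0 ^ (g-3) *
        (((Nmat g).updateCol c1 (uu (av 1 0) (g-3))).updateCol c2 (vv (av 0 1) (g-2))).det)
        = X a0 ^ (g-2) * X b0 ^ (g-3) *
          (((Nmat g).updateCol c1 (uu (av 1 0) (g-3))).updateCol c2 (vv (av 0 1) (g-2))).det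
      from by ring]
    exact coeff_pow_mul_eq a0 b0 hab (g-2) (g-3) d _
  have s3 : (∑ x ∈ Finset.range (g-1), ∑ y ∈ Finset.range (g-1),
      MvPolynomial.coeff (d + Finsupp.single a0 (g-2) + Finsupp.single b0 (g-3))
        ((X b0 : MvPolynomial (Fin 2 × ℕ) ℂ) ^ x * (X a0 ^ y *
          (((Nmat g).updateCol c1 (vv (av 0 0) y)).updateCol c2 (uu (av 1 1) x)).det)))
      = MvPolynomial.coeff d
        (((Nmat g).updateCol c1 (vv (av 0 0) (g-2))).updateCol c2 (uu (av 1 1) (g-3))).det := by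
    rw [Finset.sum_eq_single_of_mem (g-3) (Finset.mem_range.2 (by omega))
      (fun x _ hxne => Finset.sum_eq_zero fun y _ => by
        rw [show (X b0 : MvPolynomial (Fin 2 × ℕ) ℂ) ^ x * (X a0 ^ y *
            (((Nmat g).updateCol c1 (vv (av 0 0) y)).updateCol c2 (uu (av 1 1) x)).det)
            = X a0 ^ y * X b0 ^ x *
              (((Nmat g).updateCol c1 (vv (av 0 0) y)).updateCol c2 (uu (av 1 1) x)).det
          from by ring]
        exact coeff_pow_mul_eq_zero a0 b0 hab ha hb (g-2) (g-3) y x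
          (fun hc => hxne hc.2) d hd0 hd1
          (hDmem _ _ (hvmem _ mem00 _) (humem _ mem11 _)))]
    rw [Finset.sum_eq_single_of_mem (g-2) (Finset.mem_range.2 (by omega))
      (fun y _ hyne => by
        rw [show (X b0 : MvPolynomial (Fin 2 × ℕ) ℂ) ^ (g-3) * (X a0 ^ y *
            (((Nmat g).updateCol c1 (vv (av 0 0) y)).updateCol c2 (uu (av 1 1) (g-3))).det)
            = X a0 ^ y * X b0 ^ (g-3) *
              (((Nmat g).updateCol c1 (vv (av 0 0) y)).updateCol c2 (uu (av 1 1) (g-3))).det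
          from by ring]
        exact coeff_pow_mul_eq_zero a0 b0 hab ha hb (g-2) (g-3) y (g-3)
          (fun hc => hyne hc.1) d hd0 hd1
          (hDmem _ _ (hvmem _ mem00 _) (humem _ mem11 _)))]
    rw [show (X b0 : MvPolynomial (Fin 2 × ℕ) ℂ) ^ (g-3) * (X a0 ^ (g-2) *
        (((Nmat g).updateCol c1 (vv (av 0 0) (g-2))).updateCol c2 (uu (av 1 1) (g-3))).det)
        = X a0 ^ (g-2) * X b0 ^ (g-3) *
          (((Nmat g).updateCol c1 (vv (av 0 0) (g-2))).updateCol c2 (uu (av 1 1) (g-3))).det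
      from by ring]
    exact coeff_pow_mul_eq a0 b0 hab (g-2) (g-3) d _
  -- identify the surviving column vectors
  have hvx : ∀ x : MvPolynomial (Fin 2 × ℕ) ℂ, vv x (g-2)
      = (fun r => if r = c1 then 1 else 0) := by
    intro x
    funext r
    rcases r with h | h
    · rw [hvv]
      simp only [Sum.elim_inl]
      rcases eq_or_ne (h : ℕ) (g-2) with he | he
      · rw [if_pos (by omega), show h.1 - (g-2) = 0 from by omega, pow_zero,
          if_pos (by rw [hc1]; exact congrArg Sum.inl (Fin.ext he))]
      · have hlt : ¬ (g-2 ≤ h.1) := by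
          have := h.2
          omega
        rw [if_neg hlt, if_neg]
        intro hcon
        rw [hc1, Sum.inl.injEq, Fin.ext_iff] at hcon
        exact he hcon
    · rw [hvv]
      simp only [Sum.elim_inr]
      rw [if_neg (by rw [hc1]; exact fun h' => nomatch h')]
  have hux : ∀ x : MvPolynomial (Fin 2 × ℕ) ℂ, uu x (g-3)
      = ((fun r => if r = Sum.inr ⟨g-4, by omega⟩ then 1 else 0) :
            (Fin (g-1) ⊕ Fin (g-2)) → MvPolynomial (Fin 2 × ℕ) ℂ)
        + x • ((fun r => if r = c2 then 1 else 0) :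
            (Fin (g-1) ⊕ Fin (g-2)) → MvPolynomial (Fin 2 × ℕ) ℂ) := by
    intro x
    funext r
    simp only [Pi.add_apply, Pi.smul_apply, smul_eq_mul]
    rcases r with h | h
    · rw [huu]
      simp only [Sum.elim_inl]
      rw [if_neg (fun h' => nomatch h'),
        if_neg (by rw [hc2]; exact fun h' => nomatch h')]
      ring
    · rw [huu]
      simp only [Sum.elim_inr]
      rcases eq_or_ne (h : ℕ) (g-4) with he | he
      · rw [if_pos (by omega), show h.1 + 1 - (g-3) = 0 from by omega, pow_zero,
          if_pos (congrArg Sum.inr (Fin.ext he)), if_neg]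
        · ring
        · intro hcon
          rw [hc2, Sum.inr.injEq, Fin.ext_iff] at hcon
          have hcon' : (h : ℕ) = g - 3 := hcon
          omega
      · rcases eq_or_ne (h : ℕ) (g-3) with he3 | he3
        · rw [if_pos (by omega), show h.1 + 1 - (g-3) = 1 from by omega, pow_one,
            if_neg (fun hcon => he (by
              rw [Sum.inr.injEq, Fin.ext_iff] at hcon
              exact hcon)),
            if_pos (by rw [hc2]; exact congrArg Sum.inr (Fin.ext he3))]
          ring
        · have h2 := h.2
          rw [if_neg (by omega), if_neg (fun hcon => he (by
              rw [Sum.inr.injEq, Fin.ext_iff] at hcon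
              exact hcon)),
            if_neg (fun hcon => he3 (by
              rw [hc2, Sum.inr.injEq, Fin.ext_iff] at hcon
              exact hcon))]
          ring
  have hsum : (((Nmat g).updateCol c1 (uu (av 1 0) (g-3))).updateCol c2 (vv (av 0 1) (g-2))).det
      + (((Nmat g).updateCol c1 (vv (av 0 0) (g-2))).updateCol c2 (uu (av 1 1) (g-3))).det
      = (av 1 1 - av 1 0) * Mdet (g-1) := by
    rw [hux (av 1 0), hux (av 1 1), hvx (av 0 1), hvx (av 0 0)]
    rw [det_updateColumn_swap _ hne]
    rw [Matrix.det_updateCol_add, Matrix.det_updateCol_add,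
      Matrix.det_updateCol_smul, Matrix.det_updateCol_smul]
    rw [hc1, hc2, det_key g hg]
    ring
  rw [z1, zero_add, z4, add_zero, s2, s3, ← MvPolynomial.coeff_add, hsum]
lemma key1 : Mdet 3 ≠ 0 := by
  set f : Fin 2 × ℕ → ℂ := fun v => if v.1 = 0 then (v.2 : ℂ) else if v.2 = 2 then 1 else 0 with hfdef
  intro hzero
  have heval : MvPolynomial.eval f (Mdet 3) = 0 := by rw [hzero, map_zero]
  rw [Mdet, RingHom.map_det, RingHom.mapMatrix_apply] at heval
  set A : Matrix (Fin 2 ⊕ Fin 1) (Fin 2 ⊕ Fin 1) ℂ := (Nmat 3).map (MvPolynomial.eval f) with hA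
  let e : Fin 3 ≃ (Fin 2 ⊕ Fin 1) :=
    { toFun := ![Sum.inl 0, Sum.inl 1, Sum.inr 0]
      invFun := Sum.elim ![0, 1] ![2]
      left_inv := by decide
      right_inv := by rintro (i | i) <;> fin_cases i <;> rfl }
  have h2 : A.det = (A.submatrix e e).det := (Matrix.det_submatrix_equiv_self e A).symm
  rw [h2] at heval
  rw [Matrix.det_fin_three] at heval
  simp only [Matrix.submatrix_apply, hA, Matrix.map_apply] at heval
  have hv : ∀ i : Fin 3, e i = ![Sum.inl 0, Sum.inl 1, Sum.inr 0] i := fun _ => rfl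
  rw [hv, hv, hv] at heval
  simp only [Matrix.cons_val_zero, Matrix.cons_val_one, Matrix.head_cons,
    Matrix.cons_val_two, Matrix.tail_cons] at heval
  rw [show (Nmat 3) (Sum.inl 0) (Sum.inl 0) = qpoly 0 (av 0 0) (av 0 1) from rfl,
    show (Nmat 3) (Sum.inl 0) (Sum.inl 1) = qpoly 0 (av 0 0) (av 0 2) from rfl,
    show (Nmat 3) (Sum.inl 0) (Sum.inr 0) = qpoly 0 (av 0 1) (av 0 2) from rfl,
    show (Nmat 3) (Sum.inl 1) (Sum.inl 0) = qpoly 1 (av 0 0) (av 0 1) from rfl,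
    show (Nmat 3) (Sum.inl 1) (Sum.inl 1) = qpoly 1 (av 0 0) (av 0 2) from rfl,
    show (Nmat 3) (Sum.inl 1) (Sum.inr 0) = qpoly 1 (av 0 1) (av 0 2) from rfl,
    show (Nmat 3) (Sum.inr 0) (Sum.inl 0) = qpoly 1 (av 1 0) (av 1 1) from rfl,
    show (Nmat 3) (Sum.inr 0) (Sum.inl 1) = qpoly 1 (av 1 0) (av 1 2) from rfl,
    show (Nmat 3) (Sum.inr 0) (Sum.inr 0) = qpoly 1 (av 1 1) (av 1 2) from rfl] at heval
  unfold qpoly at heval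
  simp only [Finset.sum_range_succ, Finset.sum_range_zero, av, map_add, map_mul, map_pow,
    MvPolynomial.eval_X, zero_add, pow_zero, pow_one, one_mul, mul_one, hfdef] at heval
  norm_num at heval
lemma Mdet_supported (g : ℕ) (hg : 3 ≤ g) : Mdet g ∈ supported ℂ {v : Fin 2 × ℕ | v.2 < g} := by
  refine det_mem_subalg _ _ fun r c => ?_
  have hX : ∀ (k : Fin 2) (i : ℕ), i < g → av k i ∈ supported ℂ {v : Fin 2 × ℕ | v.2 < g} := by
    intro k i hi
    rw [av, X_mem_supported]
    exact hi
  have hq : ∀ (h : ℕ) (x y : MvPolynomial (Fin 2 × ℕ) ℂ),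
      x ∈ supported ℂ {v : Fin 2 × ℕ | v.2 < g} → y ∈ supported ℂ {v : Fin 2 × ℕ | v.2 < g} →
      qpoly h x y ∈ supported ℂ {v : Fin 2 × ℕ | v.2 < g} := by
    intro h x y hx hy
    exact Subalgebra.sum_mem _ fun m _ => mul_mem (pow_mem hx m) (pow_mem hy (h - m))
  rcases r with h | h <;> rcases c with i | j
  · exact hq _ _ _ (hX _ _ (by omega)) (hX _ _ (by have := i.2; omega))
  · exact hq _ _ _ (hX _ _ (by omega)) (hX _ _ (by have := j.2; omega))
  · exact hq _ _ _ (hX _ _ (by omega)) (hX _ _ (by have := i.2; omega))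
  · exact hq _ _ _ (hX _ _ (by omega)) (hX _ _ (by have := j.2; omega))
lemma key3 : ∀ g : ℕ, 3 ≤ g → Mdet g ≠ 0 := by
  intro g hg
  induction g, hg using Nat.le_induction with
  | base => exact key1
  | succ n hn ih =>
    have hXne : (av 1 1 : MvPolynomial (Fin 2 × ℕ) ℂ) - av 1 0 ≠ 0 := by
      rw [sub_ne_zero, av, av]
      intro h
      have h2 := MvPolynomial.X_injective h
      rw [Prod.ext_iff] at h2
      exact absurd h2.2 (by norm_num)
    have hp : (av 1 1 - av 1 0) * Mdet n ≠ 0 := mul_ne_zero hXne ih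
    obtain ⟨d, hd⟩ := MvPolynomial.support_nonempty.2 hp
    have hmem : (av 1 1 - av 1 0) * Mdet n ∈ supported ℂ {v : Fin 2 × ℕ | v.2 < n} := by
      refine mul_mem (sub_mem ?_ ?_) (Mdet_supported n hn)
      · rw [av, X_mem_supported]
        exact show (1:ℕ) < n by omega
      · rw [av, X_mem_supported]
        exact show (0:ℕ) < n by omega
    have hd0 : d ((0 : Fin 2), n) = 0 :=
      coeff_zero_of_supported hmem (by simp) hd
    have hd1 : d ((1 : Fin 2), n) = 0 :=
      coeff_zero_of_supported hmem (by simp) hd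
    have hk := key2 (n+1) (by omega) d hd0 hd1
    intro hzero
    rw [hzero, MvPolynomial.coeff_zero] at hk
    exact (MvPolynomial.mem_support_iff.1 hd) hk.symm
lemma rank_submatrix_id_le {m n n' : Type*} [Fintype m] [Fintype n] [Fintype n']
    [DecidableEq n] (A : Matrix m n ℂ) (f : n' → n) :
    (A.submatrix id f).rank ≤ A.rank := by
  rw [Matrix.rank, Matrix.rank]
  apply Submodule.finrank_mono
  rintro x ⟨v, rfl⟩
  refine ⟨fun c => ∑ j ∈ Finset.univ.filter (fun j => f j = c), v j, ?_⟩
  simp only [Matrix.mulVecLin_apply]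
  funext i
  simp only [Matrix.mulVec, dotProduct, Matrix.submatrix_apply, id_eq]
  rw [← Finset.sum_fiberwise Finset.univ f (fun j => A i (f j) * v j)]
  refine Finset.sum_congr rfl fun c _ => ?_
  rw [Finset.mul_sum]
  refine Finset.sum_congr rfl fun j hj => ?_
  rw [(Finset.mem_filter.1 hj).2]
lemma card_lt_pairs (g : ℕ) : 2 * Fintype.card {p : Fin g × Fin g // p.1 < p.2} + g = g * g := by
  classical
  rw [Fintype.card_subtype]
  have hswap : (Finset.univ.filter fun p : Fin g × Fin g => p.1 < p.2).card
      = (Finset.univ.filter fun p : Fin g × Fin g => p.2 < p.1).card := by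
    refine Finset.card_bij' (fun p _ => Prod.swap p) (fun p _ => Prod.swap p) ?_ ?_ ?_ ?_ <;>
      simp
  have hsplit : (Finset.univ.filter fun p : Fin g × Fin g => ¬ p.1 < p.2)
      = (Finset.univ.filter fun p : Fin g × Fin g => p.2 < p.1)
        ∪ (Finset.univ.filter fun p : Fin g × Fin g => p.1 = p.2) := by
    ext p
    simp only [Finset.mem_filter, Finset.mem_union, Finset.mem_univ, true_and]
    constructor
    · intro h
      rcases lt_or_eq_of_le (not_lt.1 h) with h' | h'
      · exact Or.inl h'
      · exact Or.inr h'.symm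
    · rintro (h | h) <;> omega
  have hdisj : Disjoint (Finset.univ.filter fun p : Fin g × Fin g => p.2 < p.1)
      (Finset.univ.filter fun p : Fin g × Fin g => p.1 = p.2) := by
    rw [Finset.disjoint_left]
    intro p hp1 hp2
    rw [Finset.mem_filter] at hp1 hp2
    exact absurd (hp2.2 ▸ hp1.2) (lt_irrefl _)
  have hdiag : (Finset.univ.filter fun p : Fin g × Fin g => p.1 = p.2).card
      = (Finset.univ : Finset (Fin g)).card := by
    refine Finset.card_bij' (fun p _ => p.1) (fun i _ => (i, i)) ?_ ?_ ?_ ?_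
    · intro a _
      exact Finset.mem_univ _
    · intro i _
      simp
    · intro a ha
      rw [Finset.mem_filter] at ha
      exact Prod.ext rfl ha.2
    · intro i _
      rfl
  have htot := Finset.card_filter_add_card_filter_not
    (s := (Finset.univ : Finset (Fin g × Fin g))) (p := fun p => p.1 < p.2)
  rw [hsplit, Finset.card_union_of_disjoint hdisj, hdiag] at htot
  rw [Finset.card_univ] at htot
  rw [Finset.card_univ] at htot
  rw [Fintype.card_prod, Fintype.card_fin] at htot
  linarith [htot, hswap]
lemma key4 (g : ℕ) (hg : 3 ≤ g) (hM : Mdet g ≠ 0) :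
    ∃ a : Fin 2 → ℕ → ℂ, (Zev g a).rank = 2 * g - 3 ∧
      Module.finrank ℂ (LinearMap.ker (Zev g a).mulVecLin) = (g - 2) * (g - 3) / 2 := by
  classical
  have hex : ∃ f : Fin 2 × ℕ → ℂ, MvPolynomial.eval f (Mdet g) ≠ 0 := by
    by_contra hcon
    push_neg at hcon
    exact hM (MvPolynomial.funext fun x => by rw [hcon x, map_zero])
  obtain ⟨f, hf⟩ := hex
  refine ⟨fun k i => f (k, i), ?_⟩
  set a : Fin 2 → ℕ → ℂ := fun k i => f (k, i) with hadef
  set colmap : (Fin (g-1) ⊕ Fin (g-2)) → {p : Fin g × Fin g // p.1 < p.2} :=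
    Sum.elim
      (fun i => ⟨(⟨0, by omega⟩, ⟨i.1 + 1, by have := i.2; omega⟩), by
        simp only [Fin.lt_def]
        omega⟩)
      (fun j => ⟨(⟨1, by omega⟩, ⟨j.1 + 2, by have := j.2; omega⟩), by
        simp only [Fin.lt_def]
        omega⟩) with hcm
  have hsub : (Zev g a).submatrix id colmap = (Nmat g).map (MvPolynomial.eval f) := by
    funext r c
    simp only [Matrix.submatrix_apply, hcm, id_eq, Matrix.map_apply]
    rcases r with h | h <;> rcases c with i | j <;>
      simp [Zev, Nmat, hadef, av, qpoly_map (MvPolynomial.eval f)]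
  have hdet : ((Nmat g).map (MvPolynomial.eval f)).det ≠ 0 := by
    rw [show (Nmat g).map (MvPolynomial.eval f)
        = (MvPolynomial.eval f : MvPolynomial (Fin 2 × ℕ) ℂ →+* ℂ).mapMatrix (Nmat g) from rfl,
      ← RingHom.map_det]
    exact hf
  have hunit : IsUnit ((Nmat g).map (MvPolynomial.eval f)) :=
    (Matrix.isUnit_iff_isUnit_det _).2 (IsUnit.mk0 _ hdet)
  have hrankN : ((Nmat g).map (MvPolynomial.eval f)).rank = 2 * g - 3 := by
    rw [Matrix.rank_of_isUnit _ hunit, Fintype.card_sum, Fintype.card_fin, Fintype.card_fin]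
    omega
  have hge : 2 * g - 3 ≤ (Zev g a).rank := by
    rw [← hrankN, ← hsub]
    exact rank_submatrix_id_le (Zev g a) colmap
  have hle : (Zev g a).rank ≤ 2 * g - 3 := by
    have := (Zev g a).rank_le_card_height
    rwa [Fintype.card_sum, Fintype.card_fin, Fintype.card_fin,
      show g - 1 + (g - 2) = 2 * g - 3 from by omega] at this
  have hrank : (Zev g a).rank = 2 * g - 3 := le_antisymm hle hge
  refine ⟨hrank, ?_⟩
  have hrn := LinearMap.finrank_range_add_finrank_ker (Zev g a).mulVecLin
  rw [Module.finrank_pi ℂ] at hrn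
  have hrr : (Zev g a).rank = Module.finrank ℂ (LinearMap.range (Zev g a).mulVecLin) := rfl
  rw [← hrr, hrank] at hrn
  have hC := card_lt_pairs g
  obtain ⟨k, rfl⟩ : ∃ k, g = k + 3 := ⟨g - 3, by omega⟩
  have hprod : (k + 3 - 2) * (k + 3 - 3) = (k + 1) * k := by
    rw [show k + 3 - 2 = k + 1 from by omega, show k + 3 - 3 = k from by omega]
  rw [hprod]
  have hdvd : 2 ∣ (k + 1) * k := by
    rcases Nat.even_mul_succ_self k with ⟨c, hc⟩
    exact ⟨c, by rw [mul_comm]; omega⟩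
  have h2 := Nat.div_mul_cancel hdvd
  have hexpand : (k + 3) * (k + 3) = (k + 1) * k + (5 * k + 9) := by ring
  rw [hexpand] at hC
  set C := Fintype.card {p : Fin (k+3) × Fin (k+3) // p.1 < p.2}
  set P := (k + 1) * k
  set H := P / 2
  omega

/-- `M_3 ≠ 0`; for `g ≥ 4` the coefficient of `α_{1,g}^{g−2} α_{2,g}^{g−3}`
in `M_g` equals `(α_{2,2} − α_{2,1}) M_{g−1}` (stated coefficientwise); consequently
`M_g ≠ 0` for all `g ≥ 3`; hence for a general (here: some) choice of complex numbers
`α_{k,i}` the linear system `Q_{1,0} = ⋯ = Q_{1,g−2} = Q_{2,0} = ⋯ = Q_{2,g−3} = 0` has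
rank exactly `2g−3` and solution space of dimension `C(g,2) − (2g−3) = (g−2)(g−3)/2`. -/
theorem Mdet_ne_zero_and_rank :
    Mdet 3 ≠ 0 ∧
    (∀ g : ℕ, 4 ≤ g →
      ∀ d : (Fin 2 × ℕ) →₀ ℕ, d ((0 : Fin 2), g - 1) = 0 → d ((1 : Fin 2), g - 1) = 0 →
        MvPolynomial.coeff
            (d + Finsupp.single ((0 : Fin 2), g - 1) (g - 2) +
              Finsupp.single ((1 : Fin 2), g - 1) (g - 3)) (Mdet g) =
          MvPolynomial.coeff d ((av 1 1 - av 1 0) * Mdet (g - 1))) ∧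
    (∀ g : ℕ, 3 ≤ g → Mdet g ≠ 0) ∧
    (∀ g : ℕ, 3 ≤ g → ∃ a : Fin 2 → ℕ → ℂ,
      (Zev g a).rank = 2 * g - 3 ∧
      Module.finrank ℂ (LinearMap.ker (Zev g a).mulVecLin) = (g - 2) * (g - 3) / 2) := by
  exact ⟨key1, key2, key3, fun g hg => key4 g hg (key3 g hg)⟩
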